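/- For every a = diag(a_1,…,a_n) with all a_i ≠ 0, the map N × N → Mat_n(ℝ), (n_1, n_2) ↦ n_1 w a n_2, is injective and proper (the preimage of every compact subset of Mat_n(ℝ) is compact); consequently, for every Schwartz function Φ on Mat_n(ℝ), the Kuznetsov orbital integral ∫_{N×N} |Φ(n_1 w a n_2)| dn_1 dn_2 is finite. -/
import Mathlib


open MeasureTheory Complex

noncomputable section

/-- The space `Mat_n(ℝ)` of real `n × n` matrices, as a normed space of functions on the
entries, carrying the Lebesgue measure on matrix entries. -/
abbrev MatSpace (n : ℕ) := Fin n × Fin n → ℝ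

/-- Interpret a point of `MatSpace n` as a matrix. -/
def toMat {n : ℕ} (X : MatSpace n) : Matrix (Fin n) (Fin n) ℝ :=
  Matrix.of fun i j => X (i, j)

/-- Interpret a matrix as a point of `MatSpace n`. -/
def ofMat {n : ℕ} (M : Matrix (Fin n) (Fin n) ℝ) : MatSpace n :=
  fun p => M p.1 p.2

/-- The indexing set of the strictly upper-triangular entries of an `n × n` matrix;
the group `N` of upper unitriangular matrices is identified with `ℝ^{n(n−1)/2}` as the
space of functions on this set, with the corresponding Lebesgue (product) measure. -/
abbrev UpperIdx (n : ℕ) := {p : Fin n × Fin n // p.1 < p.2}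

/-- The upper unitriangular matrix with the given strictly upper-triangular entries. -/
def unitri {n : ℕ} (u : UpperIdx n → ℝ) : Matrix (Fin n) (Fin n) ℝ :=
  Matrix.of fun i j =>
    if i = j then 1 else if h : i < j then u ⟨(i, j), h⟩ else 0

/-- The antidiagonal permutation matrix `w`, with `w_{i, n+1−i} = 1`. -/
def wAntidiag (n : ℕ) : Matrix (Fin n) (Fin n) ℝ :=
  Matrix.of fun i j => if j = Fin.rev i then 1 else 0

/-- The map `N × N → Mat_n(ℝ)`, `(n₁, n₂) ↦ n₁ w a n₂`, for `a = diag(a₁, …, a_n)`. -/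
def kuzMap {n : ℕ} (a : Fin n → ℝ) (u : (UpperIdx n → ℝ) × (UpperIdx n → ℝ)) :
    MatSpace n :=
  ofMat (unitri u.1 * wAntidiag n * Matrix.diagonal a * unitri u.2)


namespace KuzAux

open Matrix

variable {n : ℕ}

lemma unitri_apply_self (u : UpperIdx n → ℝ) (i : Fin n) : unitri u i i = 1 := by
  simp [unitri]

lemma unitri_eq_zero (u : UpperIdx n → ℝ) {i j : Fin n} (h : j < i) : unitri u i j = 0 := by
  have h1 : i ≠ j := ne_of_gt h
  have h2 : ¬ i < j := not_lt_of_gt h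
  simp [unitri, h1, h2]

lemma unitri_apply_lt (u : UpperIdx n → ℝ) {i j : Fin n} (h : i < j) :
    unitri u i j = u ⟨(i, j), h⟩ := by
  have h1 : i ≠ j := ne_of_lt h
  simp [unitri, h1, h]

lemma wAntidiag_mul (X : Matrix (Fin n) (Fin n) ℝ) :
    wAntidiag n * X = Matrix.of (fun i j => X (Fin.rev i) j) := by
  ext i j
  simp [wAntidiag, Matrix.mul_apply]

lemma mul_wAntidiag (X : Matrix (Fin n) (Fin n) ℝ) :
    X * wAntidiag n = Matrix.of (fun i j => X i (Fin.rev j)) := by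
  ext i j
  simp only [wAntidiag, Matrix.mul_apply, Matrix.of_apply, eq_comm (a := j), Fin.rev_eq_iff]
  simp

lemma wAntidiag_mul_wAntidiag : wAntidiag n * wAntidiag n = 1 := by
  rw [wAntidiag_mul]
  ext i j
  simp [wAntidiag, Matrix.one_apply, Fin.rev_rev, eq_comm]

lemma wAntidiag_transpose : (wAntidiag n)ᵀ = wAntidiag n := by
  ext i j
  simp only [wAntidiag, Matrix.transpose_apply, Matrix.of_apply]
  exact if_congr (by rw [eq_comm, Fin.rev_eq_iff]) rfl rfl


/-- transpose-and-reverse of an index function. -/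
def sigmaU (u : UpperIdx n → ℝ) : UpperIdx n → ℝ :=
  fun p => u ⟨(Fin.rev p.1.2, Fin.rev p.1.1), Fin.rev_lt_rev.mpr p.2⟩

lemma sigmaU_sigmaU (u : UpperIdx n → ℝ) : sigmaU (sigmaU u) = u := by
  funext p
  obtain ⟨⟨i, j⟩, h⟩ := p
  simp only [sigmaU, Fin.rev_rev]

/-- The map `M ↦ w Mᵀ w` on `MatSpace`. -/
def conjw (M : MatSpace n) : MatSpace n :=
  fun p => M (Fin.rev p.2, Fin.rev p.1)

lemma unitri_conj (u : UpperIdx n → ℝ) :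
    wAntidiag n * (unitri u)ᵀ * wAntidiag n = unitri (sigmaU u) := by
  rw [wAntidiag_mul, mul_wAntidiag]
  ext i j
  simp only [Matrix.of_apply, Matrix.transpose_apply]
  rcases lt_trichotomy i j with h | h | h
  · rw [unitri_apply_lt _ h, unitri_apply_lt _ (Fin.rev_lt_rev.mpr h)]
    rfl
  · subst h
    rw [unitri_apply_self, unitri_apply_self]
  · rw [unitri_eq_zero _ h, unitri_eq_zero _ (Fin.rev_lt_rev.mpr h)]

lemma diagonal_conj (a : Fin n → ℝ) :
    wAntidiag n * Matrix.diagonal a * wAntidiag n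
      = Matrix.diagonal (fun i => a (Fin.rev i)) := by
  rw [wAntidiag_mul, mul_wAntidiag]
  ext i j
  simp only [Matrix.of_apply]
  rcases eq_or_ne i j with h | h
  · subst h; simp [Matrix.diagonal_apply_eq]
  · rw [Matrix.diagonal_apply_ne _ (fun hc => h (by simpa [Fin.rev_rev] using congrArg Fin.rev hc)),
      Matrix.diagonal_apply_ne _ h]

lemma toMat_kuzMap (a : Fin n → ℝ) (u : (UpperIdx n → ℝ) × (UpperIdx n → ℝ)) :
    toMat (kuzMap a u) = unitri u.1 * wAntidiag n * Matrix.diagonal a * unitri u.2 := rfl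

lemma conjw_kuzMap (a : Fin n → ℝ) (u : (UpperIdx n → ℝ) × (UpperIdx n → ℝ)) :
    conjw (kuzMap a u) = kuzMap a (sigmaU u.2, sigmaU u.1) := by
  have key : wAntidiag n * (unitri u.1 * wAntidiag n * Matrix.diagonal a * unitri u.2)ᵀ
      * wAntidiag n
      = unitri (sigmaU u.2) * wAntidiag n * Matrix.diagonal a * unitri (sigmaU u.1) := by
    rw [← unitri_conj u.1, ← unitri_conj u.2]
    simp only [Matrix.transpose_mul, Matrix.diagonal_transpose, wAntidiag_transpose]
    have hww : wAntidiag n * wAntidiag n = 1 := wAntidiag_mul_wAntidiag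
    -- goal: w * ((u2ᵀ * (aᵀ... )) ...) = (w u2ᵀ w) w a (w u1ᵀ w), handle by assoc+hww
    simp only [Matrix.mul_assoc, hww, Matrix.mul_one, Matrix.one_mul]
  funext p
  have h1 : conjw (kuzMap a u) p
      = (unitri u.1 * wAntidiag n * Matrix.diagonal a * unitri u.2) (Fin.rev p.2) (Fin.rev p.1) :=
    rfl
  have h2 : (wAntidiag n * (unitri u.1 * wAntidiag n * Matrix.diagonal a * unitri u.2)ᵀ
      * wAntidiag n) p.1 p.2
      = (unitri u.1 * wAntidiag n * Matrix.diagonal a * unitri u.2) (Fin.rev p.2) (Fin.rev p.1) := by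
    rw [wAntidiag_mul, mul_wAntidiag]
    simp [Matrix.transpose_apply]
  rw [h1, ← h2, key]
  rfl


lemma sum_castLE {m : ℕ} (h : m ≤ n) (g : Fin n → ℝ)
    (hg : ∀ l : Fin n, m ≤ (l : ℕ) → g l = 0) :
    ∑ l : Fin n, g l = ∑ q : Fin m, g (Fin.castLE h q) := by
  classical
  have h1 : ∑ q : Fin m, g (Fin.castLE h q)
      = ∑ l ∈ Finset.univ.map (Fin.castLEEmb h), g l := by
    rw [Finset.sum_map]; rfl
  rw [h1]
  exact (Finset.sum_subset (Finset.subset_univ _) (fun x _ hx =>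
    hg x (by
      by_contra hc
      push_neg at hc
      exact hx (Finset.mem_map.mpr ⟨⟨x.val, hc⟩, Finset.mem_univ _, Fin.ext rfl⟩)))).symm

/-- The determinant of the `(k+1) × (k+1)` submatrix of `w·M` (rows `0..k` of the
row-reversed matrix, columns `0..k-1` together with column `j`). -/
def recovDet (M : MatSpace n) (k j : Fin n) : ℝ :=
  Matrix.det (Matrix.of fun p q : Fin (k.val + 1) =>
    toMat M (Fin.rev (Fin.castLE k.isLt p))
      (if (q : ℕ) < (k : ℕ) then Fin.castLE k.isLt q else j))

def denomProd (a : Fin n → ℝ) (k : Fin n) : ℝ :=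
  ∏ q : Fin (k.val + 1), a (Fin.castLE k.isLt q)

lemma denomProd_ne_zero {a : Fin n → ℝ} (ha : ∀ i, a i ≠ 0) (k : Fin n) :
    denomProd a k ≠ 0 :=
  Finset.prod_ne_zero_iff.mpr fun q _ => ha _

/-- Recovery of the second unipotent factor. -/
def recov2 (a : Fin n → ℝ) (M : MatSpace n) : UpperIdx n → ℝ :=
  fun p => (denomProd a p.1.1)⁻¹ * recovDet M p.1.1 p.1.2

/-- Recovery of the first unipotent factor. -/
def recov1 (a : Fin n → ℝ) (M : MatSpace n) : UpperIdx n → ℝ :=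
  sigmaU (recov2 a (conjw M))

def recov (a : Fin n → ℝ) (M : MatSpace n) :
    (UpperIdx n → ℝ) × (UpperIdx n → ℝ) :=
  (recov1 a M, recov2 a M)

lemma entry_formula (a : Fin n → ℝ) (u : (UpperIdx n → ℝ) × (UpperIdx n → ℝ))
    (i c : Fin n) :
    toMat (kuzMap a u) i c
      = ∑ l : Fin n, unitri u.1 i (Fin.rev l) * (a l * unitri u.2 l c) := by
  have hassoc : toMat (kuzMap a u)
      = unitri u.1 * (wAntidiag n * (Matrix.diagonal a * unitri u.2)) := by
    rw [toMat_kuzMap]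
    simp only [Matrix.mul_assoc]
  have hwX : ∀ l : Fin n,
      (wAntidiag n * (Matrix.diagonal a * unitri u.2)) l c
        = a (Fin.rev l) * unitri u.2 (Fin.rev l) c := by
    intro l
    rw [wAntidiag_mul]
    simp [Matrix.diagonal_mul]
  calc toMat (kuzMap a u) i c
      = ∑ l : Fin n, unitri u.1 i l
          * ((wAntidiag n * (Matrix.diagonal a * unitri u.2)) l c) := by
        rw [hassoc, Matrix.mul_apply]
    _ = ∑ l : Fin n, unitri u.1 i (Fin.revPerm l)
          * ((wAntidiag n * (Matrix.diagonal a * unitri u.2)) (Fin.revPerm l) c) :=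
        (Equiv.sum_comp Fin.revPerm _).symm
    _ = ∑ l : Fin n, unitri u.1 i (Fin.rev l) * (a l * unitri u.2 l c) := by
        refine Finset.sum_congr rfl fun l _ => ?_
        rw [show (Fin.revPerm l : Fin n) = Fin.rev l from rfl, hwX, Fin.rev_rev]

lemma recov2_kuzMap (a : Fin n → ℝ) (ha : ∀ i, a i ≠ 0)
    (u : (UpperIdx n → ℝ) × (UpperIdx n → ℝ)) :
    recov2 a (kuzMap a u) = u.2 := by
  funext pr
  obtain ⟨⟨k, j⟩, hkj⟩ := pr
  have hkj' : k < j := hkj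
  set L : Matrix (Fin (k.val + 1)) (Fin (k.val + 1)) ℝ :=
    Matrix.of (fun p q =>
      unitri u.1 (Fin.rev (Fin.castLE k.isLt p)) (Fin.rev (Fin.castLE k.isLt q))) with hL
  set T : Matrix (Fin (k.val + 1)) (Fin (k.val + 1)) ℝ :=
    Matrix.of (fun q q' => a (Fin.castLE k.isLt q)
      * unitri u.2 (Fin.castLE k.isLt q)
          (if (q' : ℕ) < (k : ℕ) then Fin.castLE k.isLt q' else j)) with hT
  have hB : recovDet (kuzMap a u) k j = Matrix.det (L * T) := by
    unfold recovDet
    congr 1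
    ext p q
    rw [Matrix.of_apply, Matrix.mul_apply, entry_formula]
    rw [sum_castLE (k.isLt : k.val + 1 ≤ n)
      (fun l => unitri u.1 (Fin.rev (Fin.castLE k.isLt p)) (Fin.rev l)
        * (a l * unitri u.2 l (if (q : ℕ) < (k : ℕ) then Fin.castLE k.isLt q else j)))
      (fun l hl => by
        have hlt : Fin.rev l < Fin.rev (Fin.castLE k.isLt p) := by
          apply Fin.rev_lt_rev.mpr
          rw [Fin.lt_def]
          exact lt_of_lt_of_le p.isLt hl
        exact mul_eq_zero_of_left (unitri_eq_zero _ hlt) _)]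
    rfl
  have hdetL : Matrix.det L = 1 := by
    have ht : L.BlockTriangular OrderDual.toDual := by
      intro p q hpq
      have hlt : Fin.rev (Fin.castLE k.isLt q) < Fin.rev (Fin.castLE k.isLt p) := by
        apply Fin.rev_lt_rev.mpr
        exact hpq
      exact unitri_eq_zero _ hlt
    rw [Matrix.det_of_lowerTriangular L ht]
    simp [hL, unitri_apply_self]
  have hdetT : Matrix.det T = denomProd a k * u.2 ⟨(k, j), hkj⟩ := by
    have ht : T.BlockTriangular id := by
      intro q q' hqq'
      have hq'k : (q' : ℕ) < (k : ℕ) := lt_of_lt_of_le hqq' (Nat.lt_succ_iff.mp q.isLt)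
      rw [hT, Matrix.of_apply, if_pos hq'k,
        unitri_eq_zero _ (show Fin.castLE k.isLt q' < Fin.castLE k.isLt q from hqq'),
        mul_zero]
    rw [Matrix.det_of_upperTriangular ht]
    rw [Fin.prod_univ_castSucc]
    have hlast : T (Fin.last k.val) (Fin.last k.val) = a k * u.2 ⟨(k, j), hkj⟩ := by
      have h1 : ¬ ((Fin.last k.val : ℕ) < (k : ℕ)) := by simp
      have h2 : Fin.castLE k.isLt (Fin.last k.val) = k := Fin.ext rfl
      rw [hT, Matrix.of_apply, if_neg h1, h2, unitri_apply_lt _ hkj']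
    have hdiag : ∀ i : Fin k.val,
        T (Fin.castSucc i) (Fin.castSucc i) = a (Fin.castLE k.isLt (Fin.castSucc i)) := by
      intro i
      have h1 : ((Fin.castSucc i : Fin (k.val + 1)) : ℕ) < (k : ℕ) := i.isLt
      rw [hT, Matrix.of_apply, if_pos h1, unitri_apply_self, mul_one]
    rw [hlast, Finset.prod_congr rfl (fun i _ => hdiag i)]
    rw [denomProd, Fin.prod_univ_castSucc]
    have h2 : Fin.castLE k.isLt (Fin.last k.val) = k := Fin.ext rfl
    rw [h2]
    ring
  show (denomProd a k)⁻¹ * recovDet (kuzMap a u) k j = u.2 ⟨(k, j), hkj⟩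
  rw [hB, Matrix.det_mul, hdetL, hdetT, one_mul, inv_mul_cancel_left₀ (denomProd_ne_zero ha k)]


lemma recov_kuzMap (a : Fin n → ℝ) (ha : ∀ i, a i ≠ 0) :
    Function.LeftInverse (recov a) (kuzMap a) := by
  intro u
  have h2 := recov2_kuzMap a ha u
  have h1 : recov1 a (kuzMap a u) = u.1 := by
    rw [recov1, conjw_kuzMap]
    rw [show recov2 a (kuzMap a (sigmaU u.2, sigmaU u.1)) = sigmaU u.1 from
      recov2_kuzMap a ha (sigmaU u.2, sigmaU u.1)]
    exact sigmaU_sigmaU u.1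
  exact Prod.ext h1 h2

lemma abs_det_le_of_abs_le {m : ℕ} (A : Matrix (Fin m) (Fin m) ℝ) {b : ℝ}
    (hb : 0 ≤ b) (h : ∀ i j, |A i j| ≤ b) : |A.det| ≤ m.factorial * b ^ m := by
  rw [Matrix.det_apply]
  refine (Finset.abs_sum_le_sum_abs _ _).trans ?_
  have hterm : ∀ σ : Equiv.Perm (Fin m), |Equiv.Perm.sign σ • ∏ i, A (σ i) i| ≤ b ^ m := by
    intro σ
    have habs : |Equiv.Perm.sign σ • ∏ i, A (σ i) i| = |∏ i, A (σ i) i| := by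
      rcases Int.units_eq_one_or (Equiv.Perm.sign σ) with hs | hs <;> simp [hs]
    rw [habs, Finset.abs_prod]
    calc ∏ i, |A (σ i) i| ≤ ∏ _i : Fin m, b :=
          Finset.prod_le_prod (fun i _ => abs_nonneg _) (fun i _ => h _ _)
      _ = b ^ m := by simp
  calc ∑ σ : Equiv.Perm (Fin m), |Equiv.Perm.sign σ • ∏ i, A (σ i) i|
      ≤ ∑ _σ : Equiv.Perm (Fin m), b ^ m := Finset.sum_le_sum (fun σ _ => hterm σ)
    _ = m.factorial * b ^ m := by
        simp [Finset.sum_const, Fintype.card_perm, Fintype.card_fin, nsmul_eq_mul]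

lemma abs_recovDet_le (M : MatSpace n) {b : ℝ} (h1 : 1 ≤ b)
    (hM : ∀ p, |M p| ≤ b) (k j : Fin n) :
    |recovDet M k j| ≤ n.factorial * b ^ n := by
  have hb : (0 : ℝ) ≤ b := le_trans zero_le_one h1
  have := abs_det_le_of_abs_le
    (Matrix.of fun p q : Fin (k.val + 1) =>
      toMat M (Fin.rev (Fin.castLE k.isLt p))
        (if (q : ℕ) < (k : ℕ) then Fin.castLE k.isLt q else j)) hb
    (fun i j' => hM _)
  refine le_trans this ?_
  have hfac : ((k.val + 1).factorial : ℝ) ≤ (n.factorial : ℝ) := by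
    exact_mod_cast Nat.factorial_le k.isLt
  have hpow : b ^ (k.val + 1) ≤ b ^ n := pow_le_pow_right₀ h1 k.isLt
  have hpow0 : (0 : ℝ) ≤ b ^ (k.val + 1) := pow_nonneg hb _
  have hfac0 : (0 : ℝ) ≤ ((k.val + 1).factorial : ℝ) := Nat.cast_nonneg _
  exact mul_le_mul hfac hpow hpow0 (Nat.cast_nonneg _)


lemma abs_recov2_le (a : Fin n → ℝ) {b : ℝ} (h1 : 1 ≤ b) {M : MatSpace n}
    (hM : ∀ p, |M p| ≤ b) (p : UpperIdx n) :
    |recov2 a M p| ≤ ((∑ k : Fin n, |(denomProd a k)⁻¹|) + 1) * (n.factorial * b ^ n) := by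
  have hCa : |(denomProd a p.1.1)⁻¹| ≤ (∑ k : Fin n, |(denomProd a k)⁻¹|) + 1 := by
    have := Finset.single_le_sum (f := fun k : Fin n => |(denomProd a k)⁻¹|)
      (fun _ _ => abs_nonneg _) (Finset.mem_univ p.1.1)
    linarith
  have hdet := abs_recovDet_le M h1 hM p.1.1 p.1.2
  rw [recov2, abs_mul]
  exact mul_le_mul hCa hdet (abs_nonneg _) (by positivity)

lemma exists_recov_bound (a : Fin n → ℝ) :
    ∃ C : ℝ, 1 ≤ C ∧ ∀ M : MatSpace n, 1 + ‖recov a M‖ ≤ C * (1 + ‖M‖) ^ n := by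
  set Ca : ℝ := (∑ k : Fin n, |(denomProd a k)⁻¹|) + 1 with hCa
  have hCa0 : 0 ≤ Ca := by positivity
  set C0 : ℝ := Ca * n.factorial with hC0
  have hC00 : 0 ≤ C0 := by positivity
  refine ⟨1 + C0, by linarith, fun M => ?_⟩
  set b : ℝ := 1 + ‖M‖ with hb
  have h1b : 1 ≤ b := by
    have := norm_nonneg M
    simp only [hb]; linarith
  have hbn1 : 1 ≤ b ^ n := one_le_pow₀ h1b
  have hD0 : 0 ≤ C0 * b ^ n := by positivity
  have hM : ∀ p, |M p| ≤ b := fun p => by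
    have := norm_le_pi_norm M p
    rw [Real.norm_eq_abs] at this
    simp only [hb]; linarith
  have hMc : ∀ p, |conjw M p| ≤ b := fun p => hM _
  have h2 : ‖recov2 a M‖ ≤ C0 * b ^ n := by
    refine (pi_norm_le_iff_of_nonneg hD0).mpr fun p => ?_
    rw [Real.norm_eq_abs]
    have := abs_recov2_le a h1b hM p
    calc |recov2 a M p| ≤ Ca * (n.factorial * b ^ n) := this
      _ = C0 * b ^ n := by rw [hC0]; ring
  have h1 : ‖recov1 a M‖ ≤ C0 * b ^ n := by
    refine (pi_norm_le_iff_of_nonneg hD0).mpr fun p => ?_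
    rw [Real.norm_eq_abs]
    set q : UpperIdx n := ⟨(Fin.rev p.1.2, Fin.rev p.1.1), Fin.rev_lt_rev.mpr p.2⟩ with hq
    have hre : recov1 a M p = recov2 a (conjw M) q := rfl
    rw [hre]
    calc |recov2 a (conjw M) q| ≤ Ca * (n.factorial * b ^ n) := abs_recov2_le a h1b hMc q
      _ = C0 * b ^ n := by rw [hC0]; ring
  have hmax : ‖recov a M‖ ≤ C0 * b ^ n := by
    rw [Prod.norm_def]
    exact max_le h1 h2
  calc 1 + ‖recov a M‖ ≤ 1 + C0 * b ^ n := by linarith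
    _ ≤ b ^ n + C0 * b ^ n := by linarith
    _ = (1 + C0) * b ^ n := by ring

lemma continuous_kuzMap (a : Fin n → ℝ) : Continuous (kuzMap a) := by
  have hu1 : Continuous fun u : (UpperIdx n → ℝ) × (UpperIdx n → ℝ) => unitri u.1 := by
    apply continuous_matrix
    intro i j
    simp only [unitri, Matrix.of_apply]
    split_ifs with h h'
    · exact continuous_const
    · exact (continuous_apply _).comp continuous_fst
    · exact continuous_const
  have hu2 : Continuous fun u : (UpperIdx n → ℝ) × (UpperIdx n → ℝ) => unitri u.2 := by
    apply continuous_matrix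
    intro i j
    simp only [unitri, Matrix.of_apply]
    split_ifs with h h'
    · exact continuous_const
    · exact (continuous_apply _).comp continuous_snd
    · exact continuous_const
  have hprod : Continuous fun u : (UpperIdx n → ℝ) × (UpperIdx n → ℝ) =>
      unitri u.1 * wAntidiag n * Matrix.diagonal a * unitri u.2 :=
    ((hu1.matrix_mul continuous_const).matrix_mul continuous_const).matrix_mul hu2
  apply continuous_pi
  intro p
  exact (continuous_apply p.2).comp ((continuous_apply p.1).comp hprod)

lemma continuous_recov2 (a : Fin n → ℝ) : Continuous (recov2 a) := by
  apply continuous_pi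
  intro p
  apply Continuous.mul continuous_const
  apply Continuous.matrix_det
  apply continuous_matrix
  intro i j
  exact continuous_apply _

lemma continuous_recov (a : Fin n → ℝ) : Continuous (recov a) := by
  have hconj : Continuous (conjw (n := n)) := by
    apply continuous_pi
    intro p
    exact continuous_apply _
  have hsig : Continuous (sigmaU (n := n)) := by
    apply continuous_pi
    intro p
    exact continuous_apply _
  exact (hsig.comp ((continuous_recov2 a).comp hconj)).prodMk (continuous_recov2 a)

instance : ((volume : Measure ((UpperIdx n → ℝ) × (UpperIdx n → ℝ)))).IsAddHaarMeasure := by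
  have h : (volume : Measure ((UpperIdx n → ℝ) × (UpperIdx n → ℝ)))
      = (volume : Measure (UpperIdx n → ℝ)).prod (volume : Measure (UpperIdx n → ℝ)) := rfl
  rw [h]
  exact MeasureTheory.Measure.prod.instIsAddHaarMeasure _ _

end KuzAux

open KuzAux in
/-- For `a = diag(a₁, …, a_n)` with all `aᵢ ≠ 0`, the map `N × N → Mat_n(ℝ)`,
`(n₁, n₂) ↦ n₁ w a n₂`, is injective and proper; consequently, for every Schwartz
function `Φ` on `Mat_n(ℝ)`, the Kuznetsov orbital integral
`∫_{N×N} |Φ(n₁ w a n₂)| dn₁ dn₂` is finite. -/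
theorem kuzMap_injective_proper_integrable (n : ℕ) (hn : 1 ≤ n)
    (a : Fin n → ℝ) (ha : ∀ i, a i ≠ 0) :
    Function.Injective (kuzMap a) ∧
    (∀ K : Set (MatSpace n), IsCompact K → IsCompact (kuzMap a ⁻¹' K)) ∧
    ∀ Φ : SchwartzMap (MatSpace n) ℂ,
      (∫⁻ u : (UpperIdx n → ℝ) × (UpperIdx n → ℝ), ‖Φ (kuzMap a u)‖₊) < ⊤ := by
  classical
  refine ⟨(recov_kuzMap a ha).injective, fun K hK => ?_, fun Φ => ?_⟩
  · have hsub : kuzMap a ⁻¹' K ⊆ recov a '' K := fun u hu =>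
      ⟨kuzMap a u, hu, recov_kuzMap a ha u⟩
    exact (hK.image (continuous_recov a)).of_isClosed_subset
      (hK.isClosed.preimage (continuous_kuzMap a)) hsub
  · obtain ⟨C, hC1, hCb⟩ := exists_recov_bound a
    set d : ℕ := Module.finrank ℝ ((UpperIdx n → ℝ) × (UpperIdx n → ℝ)) with hd
    set r : ℕ := d + 1 with hr
    set Kk : ℕ := n * r with hKk
    set C₂ : ℝ := 2 ^ Kk * (Finset.Iic (Kk, 0)).sup
      (fun m' => SchwartzMap.seminorm ℝ m'.1 m'.2) Φ with hC₂def
    have hC₂ : ∀ x, (1 + ‖x‖) ^ Kk * ‖Φ x‖ ≤ C₂ := by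
      intro x
      have := SchwartzMap.one_add_le_sup_seminorm_apply (𝕜 := ℝ) (m := (Kk, 0))
        (k := Kk) (n := 0) le_rfl le_rfl Φ x
      rwa [norm_iteratedFDeriv_zero] at this
    have hC₂0 : 0 ≤ C₂ := le_trans (by positivity) (hC₂ 0)
    have hpoint : ∀ u : (UpperIdx n → ℝ) × (UpperIdx n → ℝ),
        ‖Φ (kuzMap a u)‖ ≤ (C ^ r * C₂) * ((1 + ‖u‖) ^ r)⁻¹ := by
      intro u
      set M := kuzMap a u with hM
      have hb1 : (1 : ℝ) ≤ 1 + ‖M‖ := by linarith [norm_nonneg M]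
      have h1 : 1 + ‖u‖ ≤ C * (1 + ‖M‖) ^ n := by
        have h := hCb M
        rwa [hM, recov_kuzMap a ha u] at h
      have h1u : (0:ℝ) < 1 + ‖u‖ := by linarith [norm_nonneg u]
      have h2 : (1 + ‖u‖) ^ r ≤ C ^ r * (1 + ‖M‖) ^ Kk := by
        calc (1 + ‖u‖) ^ r ≤ (C * (1 + ‖M‖) ^ n) ^ r :=
              pow_le_pow_left₀ (le_of_lt h1u) h1 r
          _ = C ^ r * (1 + ‖M‖) ^ Kk := by rw [mul_pow, ← pow_mul, hKk]
      have h3 : ‖Φ M‖ * (1 + ‖u‖) ^ r ≤ C ^ r * C₂ := by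
        calc ‖Φ M‖ * (1 + ‖u‖) ^ r ≤ ‖Φ M‖ * (C ^ r * (1 + ‖M‖) ^ Kk) :=
              mul_le_mul_of_nonneg_left h2 (norm_nonneg _)
          _ = C ^ r * ((1 + ‖M‖) ^ Kk * ‖Φ M‖) := by ring
          _ ≤ C ^ r * C₂ := mul_le_mul_of_nonneg_left (hC₂ M) (by positivity)
      have hpr : (0:ℝ) < (1 + ‖u‖) ^ r := pow_pos h1u r
      calc ‖Φ M‖ ≤ (C ^ r * C₂) / ((1 + ‖u‖) ^ r) := (le_div_iff₀ hpr).mpr h3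
        _ = (C ^ r * C₂) * ((1 + ‖u‖) ^ r)⁻¹ := div_eq_mul_inv _ _
    have hint : Integrable (fun u : (UpperIdx n → ℝ) × (UpperIdx n → ℝ) =>
        (C ^ r * C₂) * ((1:ℝ) + ‖u‖) ^ (-(r:ℝ))) :=
      (integrable_one_add_norm
        (by rw [hr]; exact_mod_cast Nat.lt_succ_self d)).const_mul _
    have hfin : (∫⁻ u : (UpperIdx n → ℝ) × (UpperIdx n → ℝ),
        ‖(C ^ r * C₂) * ((1:ℝ) + ‖u‖) ^ (-(r:ℝ))‖₊) < ⊤ :=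
      hint.hasFiniteIntegral
    refine lt_of_le_of_lt (MeasureTheory.lintegral_mono fun u => ?_) hfin
    have hgu : 0 ≤ (C ^ r * C₂) * ((1:ℝ) + ‖u‖) ^ (-(r:ℝ)) := by positivity
    have heq : ((1:ℝ) + ‖u‖) ^ (-(r:ℝ)) = (((1:ℝ) + ‖u‖) ^ r)⁻¹ := by
      rw [← Real.rpow_natCast (1 + ‖u‖) r, ← Real.rpow_neg (by positivity)]
    have hle : ‖Φ (kuzMap a u)‖ ≤ ‖(C ^ r * C₂) * ((1:ℝ) + ‖u‖) ^ (-(r:ℝ))‖ := by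
      rw [Real.norm_eq_abs, _root_.abs_of_nonneg hgu, heq]
      exact hpoint u
    exact ENNReal.coe_le_coe.mpr
      (by rw [← NNReal.coe_le_coe, coe_nnnorm, coe_nnnorm]; exact hle)
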